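/- Let 𝒢 be connected, x in the interior of the probability simplex (x_i > 0, Σx_i = 1), and T_x = {σ ∈ ℝⁿ : Σ_i σ_i = 0} the tangent space. Then the bilinear form g_x(σ₁, σ₂) = σ₁ᵀ L(x)⁺ σ₂, with L(x)⁺ the Moore–Penrose pseudoinverse of the weighted Laplacian, is a positive definite inner product on T_x. -/
import Mathlib


open Matrix Finset

/-- The weighted graph Laplacian `L(x)`. -/
noncomputable def lap {n : ℕ} (ω : Matrix (Fin n) (Fin n) ℝ) (d : Fin n → ℝ)
    (x : Fin n → ℝ) : Matrix (Fin n) (Fin n) ℝ :=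
  Matrix.of fun i j =>
    if i = j then (1 / 2) * ∑ k, ω i k * (x i / d i + x k / d k)
    else -(1 / 2) * (ω i j * (x i / d i + x j / d j))

/-- `P` is the Moore–Penrose pseudoinverse of `A` (the four Penrose conditions). -/
def IsMoorePenrose {n : ℕ} (A P : Matrix (Fin n) (Fin n) ℝ) : Prop :=
  A * P * A = A ∧ P * A * P = P ∧ (A * P)ᵀ = A * P ∧ (P * A)ᵀ = P * A

lemma lap_mulVec {n : ℕ} (ω : Matrix (Fin n) (Fin n) ℝ) (d x : Fin n → ℝ)
    (hloop : ∀ i, ω i i = 0) (u : Fin n → ℝ) (i : Fin n) :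
    (lap ω d x *ᵥ u) i = (1/2) * ∑ j, ω i j * (x i / d i + x j / d j) * (u i - u j) := by
  have hLij : ∀ j, lap ω d x i j = (if i = j then (1:ℝ) else 0) *
      ((1/2) * ∑ k, ω i k * (x i / d i + x k / d k))
      - (1/2) * (ω i j * (x i / d i + x j / d j)) := by
    intro j
    by_cases h : i = j
    · subst h; simp [lap, hloop i]
    · simp [lap, h]
  calc (lap ω d x *ᵥ u) i = ∑ j, lap ω d x i j * u j := rfl
    _ = ∑ j, ((if i = j then ((1/2) * ∑ k, ω i k * (x i / d i + x k / d k)) * u j else 0)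
          - (1/2) * (ω i j * (x i / d i + x j / d j)) * u j) := by
        refine Finset.sum_congr rfl fun j _ => ?_
        rw [hLij j]
        by_cases h : i = j
        · simp [h]; ring
        · simp [h]
    _ = ((1/2) * ∑ k, ω i k * (x i / d i + x k / d k)) * u i
          - ∑ j, (1/2) * (ω i j * (x i / d i + x j / d j)) * u j := by
        rw [Finset.sum_sub_distrib, Finset.sum_ite_eq]; simp
    _ = (1/2) * ∑ j, ω i j * (x i / d i + x j / d j) * (u i - u j) := by
        simp only [Finset.mul_sum, Finset.sum_mul, ← Finset.sum_sub_distrib]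
        exact Finset.sum_congr rfl fun j _ => by ring

lemma lap_quad {n : ℕ} (ω : Matrix (Fin n) (Fin n) ℝ) (d x : Fin n → ℝ)
    (hsym : ∀ i j, ω i j = ω j i) (hloop : ∀ i, ω i i = 0) (u : Fin n → ℝ) :
    u ⬝ᵥ (lap ω d x *ᵥ u)
      = ∑ i, ∑ j, (1/4) * (ω i j * (x i / d i + x j / d j) * (u i - u j)^2) := by
  have h1 : u ⬝ᵥ (lap ω d x *ᵥ u)
      = ∑ i, ∑ j, (1/2) * (ω i j * (x i / d i + x j / d j) * (u i * (u i - u j))) := by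
    simp only [dotProduct, lap_mulVec ω d x hloop, Finset.mul_sum]
    exact Finset.sum_congr rfl fun i _ => Finset.sum_congr rfl fun j _ => by ring
  rw [h1]
  have h2 : (∑ i, ∑ j, (1/2) * (ω i j * (x i / d i + x j / d j) * (u i * (u i - u j))))
      = ∑ i, ∑ j, (1/2) * (ω i j * (x i / d i + x j / d j) * (u j * (u j - u i))) := by
    rw [Finset.sum_comm]
    refine Finset.sum_congr rfl fun a _ => Finset.sum_congr rfl fun b _ => ?_
    rw [hsym b a]; ring
  have h5 : (2:ℝ) * (∑ i, ∑ j, (1/2) * (ω i j * (x i / d i + x j / d j) * (u i * (u i - u j))))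
      = 2 * ∑ i, ∑ j, (1/4) * (ω i j * (x i / d i + x j / d j) * (u i - u j)^2) := by
    calc (2:ℝ) * (∑ i, ∑ j, (1/2) * (ω i j * (x i / d i + x j / d j) * (u i * (u i - u j))))
        = (∑ i, ∑ j, (1/2) * (ω i j * (x i / d i + x j / d j) * (u i * (u i - u j))))
          + (∑ i, ∑ j, (1/2) * (ω i j * (x i / d i + x j / d j) * (u i * (u i - u j)))) := by ring
      _ = (∑ i, ∑ j, (1/2) * (ω i j * (x i / d i + x j / d j) * (u i * (u i - u j))))
          + (∑ i, ∑ j, (1/2) * (ω i j * (x i / d i + x j / d j) * (u j * (u j - u i)))) := by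
          rw [h2]
      _ = ∑ i, ∑ j, ((1/2) * (ω i j * (x i / d i + x j / d j) * (u i * (u i - u j)))
          + (1/2) * (ω i j * (x i / d i + x j / d j) * (u j * (u j - u i)))) := by
          simp only [← Finset.sum_add_distrib]
      _ = 2 * ∑ i, ∑ j, (1/4) * (ω i j * (x i / d i + x j / d j) * (u i - u j)^2) := by
          simp only [Finset.mul_sum]
          exact Finset.sum_congr rfl fun i _ => Finset.sum_congr rfl fun j _ => by ring
  exact mul_left_cancel₀ two_ne_zero h5

lemma lap_rowsum {n : ℕ} (ω : Matrix (Fin n) (Fin n) ℝ) (d x : Fin n → ℝ)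
    (hsym : ∀ i j, ω i j = ω j i) (hloop : ∀ i, ω i i = 0) (u : Fin n → ℝ) :
    ∑ i, (lap ω d x *ᵥ u) i = 0 := by
  have h1 : ∑ i, (lap ω d x *ᵥ u) i
      = ∑ i, ∑ j, (1/2) * (ω i j * (x i / d i + x j / d j) * (u i - u j)) := by
    simp only [lap_mulVec ω d x hloop, Finset.mul_sum]
  rw [h1]
  have h2 : (∑ i, ∑ j, (1/2) * (ω i j * (x i / d i + x j / d j) * (u i - u j)))
      = ∑ i, ∑ j, -((1/2) * (ω i j * (x i / d i + x j / d j) * (u i - u j))) := by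
    rw [Finset.sum_comm]
    refine Finset.sum_congr rfl fun a _ => Finset.sum_congr rfl fun b _ => ?_
    rw [hsym b a]; ring
  simp only [Finset.sum_neg_distrib] at h2
  linarith

lemma lap_const {n : ℕ} (ω : Matrix (Fin n) (Fin n) ℝ) (d x : Fin n → ℝ)
    (hloop : ∀ i, ω i i = 0) (c : ℝ) :
    lap ω d x *ᵥ (fun _ => c) = 0 := by
  funext i
  rw [lap_mulVec ω d x hloop]
  simp

lemma mp_unique {n : ℕ} {A P Q : Matrix (Fin n) (Fin n) ℝ}
    (hP : IsMoorePenrose A P) (hQ : IsMoorePenrose A Q) : P = Q := by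
  obtain ⟨hP1, hP2, hP3, hP4⟩ := hP
  obtain ⟨hQ1, hQ2, hQ3, hQ4⟩ := hQ
  have hAt : Aᵀ = Aᵀ * (A * Q) := by
    calc Aᵀ = (A * Q * A)ᵀ := by rw [hQ1]
      _ = Aᵀ * (A * Q)ᵀ := Matrix.transpose_mul _ _
      _ = Aᵀ * (A * Q) := by rw [hQ3]
  have hAP : A * P = A * Q := by
    calc A * P = (A * P)ᵀ := hP3.symm
      _ = Pᵀ * Aᵀ := Matrix.transpose_mul _ _
      _ = Pᵀ * (Aᵀ * (A * Q)) := by rw [← hAt]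
      _ = (Pᵀ * Aᵀ) * (A * Q) := by rw [Matrix.mul_assoc]
      _ = (A * P)ᵀ * (A * Q) := by rw [Matrix.transpose_mul]
      _ = (A * P) * (A * Q) := by rw [hP3]
      _ = ((A * P) * A) * Q := by rw [← Matrix.mul_assoc]
      _ = A * Q := by rw [hP1]
  have hAt' : Aᵀ = (Q * A) * Aᵀ := by
    calc Aᵀ = (A * (Q * A))ᵀ := by rw [← Matrix.mul_assoc, hQ1]
      _ = (Q * A)ᵀ * Aᵀ := Matrix.transpose_mul _ _
      _ = (Q * A) * Aᵀ := by rw [hQ4]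
  have hPA : P * A = Q * A := by
    calc P * A = (P * A)ᵀ := hP4.symm
      _ = Aᵀ * Pᵀ := Matrix.transpose_mul _ _
      _ = ((Q * A) * Aᵀ) * Pᵀ := by rw [← hAt']
      _ = (Q * A) * (Aᵀ * Pᵀ) := by rw [Matrix.mul_assoc]
      _ = (Q * A) * (P * A)ᵀ := by rw [← Matrix.transpose_mul]
      _ = (Q * A) * (P * A) := by rw [hP4]
      _ = Q * (A * (P * A)) := by rw [Matrix.mul_assoc]
      _ = Q * (A * P * A) := by rw [← Matrix.mul_assoc A P A]
      _ = Q * A := by rw [hP1]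
  calc P = P * A * P := hP2.symm
    _ = Q * A * P := by rw [hPA]
    _ = Q * (A * P) := Matrix.mul_assoc _ _ _
    _ = Q * (A * Q) := by rw [hAP]
    _ = Q * A * Q := (Matrix.mul_assoc _ _ _).symm
    _ = Q := hQ2

lemma mp_transpose {n : ℕ} {A P : Matrix (Fin n) (Fin n) ℝ} (hA : Aᵀ = A)
    (h : IsMoorePenrose A P) : IsMoorePenrose A Pᵀ := by
  obtain ⟨hP1, hP2, hP3, hP4⟩ := h
  have e3 : A * Pᵀ = P * A := by rw [← hP4, Matrix.transpose_mul, hA]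
  have e4 : Pᵀ * A = A * P := by rw [← hP3, Matrix.transpose_mul, hA]
  refine ⟨?_, ?_, ?_, ?_⟩
  · have h1 := congrArg Matrix.transpose hP1
    simp only [Matrix.transpose_mul, hA] at h1
    calc A * Pᵀ * A = A * (Pᵀ * A) := Matrix.mul_assoc _ _ _
      _ = A := h1
  · have h1 := congrArg Matrix.transpose hP2
    simp only [Matrix.transpose_mul, hA] at h1
    calc Pᵀ * A * Pᵀ = Pᵀ * (A * Pᵀ) := Matrix.mul_assoc _ _ _
      _ = Pᵀ := h1
  · rw [e3]; exact hP4
  · rw [e4]; exact hP3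

lemma mp_symm {n : ℕ} {A P : Matrix (Fin n) (Fin n) ℝ} (hA : Aᵀ = A)
    (h : IsMoorePenrose A P) : Pᵀ = P :=
  mp_unique (mp_transpose hA h) h

/-- Let the graph be connected and `x` be in the interior of the
probability simplex. Then the bilinear form `g_x(σ₁,σ₂) = σ₁ᵀ L(x)⁺ σ₂` is a positive
definite inner product on the tangent space `T_x = {σ : Σσ_i = 0}`: it is symmetric,
bilinear (automatic), and `σᵀ L(x)⁺ σ > 0` for every nonzero tangent vector `σ`. -/
theorem wasserstein_metric_posdef {n : ℕ} (ω : Matrix (Fin n) (Fin n) ℝ)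
    (d : Fin n → ℝ)
    (hsym : ∀ i j, ω i j = ω j i) (hnn : ∀ i j, 0 ≤ ω i j)
    (hloop : ∀ i, ω i i = 0) (hd : ∀ i, 0 < d i)
    (hconn : ∀ i j : Fin n, Relation.ReflTransGen (fun a b => 0 < ω a b) i j)
    (x : Fin n → ℝ) (hx : ∀ i, 0 < x i) (hx1 : ∑ i, x i = 1)
    (Lp : Matrix (Fin n) (Fin n) ℝ) (hLp : IsMoorePenrose (lap ω d x) Lp) :
    (∀ σ₁ σ₂ : Fin n → ℝ, σ₁ ⬝ᵥ Lp.mulVec σ₂ = σ₂ ⬝ᵥ Lp.mulVec σ₁) ∧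
    (∀ σ : Fin n → ℝ, (∑ i, σ i) = 0 → σ ≠ 0 → 0 < σ ⬝ᵥ Lp.mulVec σ) := by
  have hLsym : (lap ω d x)ᵀ = lap ω d x := by
    ext i j
    show lap ω d x j i = lap ω d x i j
    by_cases h : i = j
    · subst h; rfl
    · simp only [lap, Matrix.of_apply]
      rw [if_neg h, if_neg (show ¬ j = i from fun hji => h hji.symm), hsym j i]
      ring
  have hPsym : Lpᵀ = Lp := mp_symm hLsym hLp
  have hs : ∀ i j, Lp i j = Lp j i := fun i j => by
    conv_lhs => rw [← hPsym, Matrix.transpose_apply]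
  constructor
  · intro σ₁ σ₂
    calc σ₁ ⬝ᵥ Lp.mulVec σ₂ = ∑ i, ∑ j, σ₁ i * (Lp i j * σ₂ j) := by
          simp [dotProduct, Matrix.mulVec, Finset.mul_sum]
      _ = ∑ j, ∑ i, σ₁ i * (Lp i j * σ₂ j) := Finset.sum_comm
      _ = ∑ j, ∑ i, σ₂ j * (Lp j i * σ₁ i) := by
          refine Finset.sum_congr rfl fun j _ => Finset.sum_congr rfl fun i _ => ?_
          rw [hs i j]; ring
      _ = σ₂ ⬝ᵥ Lp.mulVec σ₁ := by
          simp [dotProduct, Matrix.mulVec, Finset.mul_sum]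
  · intro σ hσsum hσne
    have hθ : ∀ i j, 0 < x i / d i + x j / d j := fun i j =>
      add_pos (div_pos (hx i) (hd i)) (div_pos (hx j) (hd j))
    have hqnn : ∀ (u : Fin n → ℝ) i j,
        0 ≤ (1/4) * (ω i j * (x i / d i + x j / d j) * (u i - u j)^2) := fun u i j => by
      have := mul_nonneg (mul_nonneg (hnn i j) (hθ i j).le) (sq_nonneg (u i - u j))
      linarith
    -- quadratic form zero implies constant
    have hconst : ∀ u : Fin n → ℝ, u ⬝ᵥ (lap ω d x *ᵥ u) = 0 → ∀ i j, u i = u j := by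
      intro u hu
      have h0 : ∑ i, ∑ j, (1/4) * (ω i j * (x i / d i + x j / d j) * (u i - u j)^2) = 0 := by
        rw [← lap_quad ω d x hsym hloop u]; exact hu
      have hinner : ∀ i ∈ (univ : Finset (Fin n)),
          ∑ j, (1/4) * (ω i j * (x i / d i + x j / d j) * (u i - u j)^2) = 0 :=
        (Finset.sum_eq_zero_iff_of_nonneg
          (fun i _ => Finset.sum_nonneg fun j _ => hqnn u i j)).mp h0
      have hterm : ∀ i j, (1/4) * (ω i j * (x i / d i + x j / d j) * (u i - u j)^2) = 0 :=
        fun i j => (Finset.sum_eq_zero_iff_of_nonneg (fun j _ => hqnn u i j)).mp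
          (hinner i (mem_univ i)) j (mem_univ j)
      have hadj : ∀ i j, 0 < ω i j → u i = u j := by
        intro i j hwij
        have h1 := hterm i j
        have hpos : 0 < ω i j * (x i / d i + x j / d j) := mul_pos hwij (hθ i j)
        have hz : (u i - u j)^2 = 0 := by
          by_contra hne
          have h2 : 0 < (u i - u j)^2 := lt_of_le_of_ne (sq_nonneg _) (Ne.symm hne)
          nlinarith
        have := pow_eq_zero_iff (n := 2) (by norm_num) |>.mp hz
        linarith [this]
      intro i j
      have hc := hconn i j
      induction hc with
      | refl => rfl
      | tail _ h ih => exact ih.trans (hadj _ _ h)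
    rcases Nat.eq_zero_or_pos n with hn | hn
    · exfalso
      apply hσne
      funext i
      exact absurd i.isLt (by omega)
    · set L := lap ω d x with hLdef
      let i0 : Fin n := ⟨0, hn⟩
      set f := Matrix.mulVecLin L with hfdef
      have hone : (fun _ : Fin n => (1:ℝ)) ≠ 0 := by
        intro h
        have := congrFun h i0
        simp at this
      have hker_f : LinearMap.ker f = Submodule.span ℝ {(fun _ : Fin n => (1:ℝ))} := by
        apply le_antisymm
        · intro u hu
          have hu0 : L *ᵥ u = 0 := by
            simpa [hfdef, Matrix.mulVecLin_apply] using (LinearMap.mem_ker.mp hu)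
          have hcu : ∀ i j, u i = u j := hconst u (by rw [hu0]; simp [dotProduct])
          have : u = (u i0) • (fun _ : Fin n => (1:ℝ)) := funext fun j => by
            simp [hcu j i0]
          rw [this]
          exact Submodule.smul_mem _ _ (Submodule.mem_span_singleton_self _)
        · rw [Submodule.span_le]
          intro v hv
          rcases Set.mem_singleton_iff.mp hv with rfl
          exact LinearMap.mem_ker.mpr (by
            simp only [hfdef, Matrix.mulVecLin_apply]
            exact lap_const ω d x hloop 1)
      let g : (Fin n → ℝ) →ₗ[ℝ] ℝ := ∑ i, LinearMap.proj i
      have hg : ∀ u : Fin n → ℝ, g u = ∑ i, u i := fun u => by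
        simp [g, LinearMap.sum_apply, LinearMap.proj_apply]
      have hrange_le : LinearMap.range f ≤ LinearMap.ker g := by
        rintro _ ⟨u, rfl⟩
        rw [LinearMap.mem_ker, hg]
        simpa [hfdef, Matrix.mulVecLin_apply] using lap_rowsum ω d x hsym hloop u
      have hgsurj : Function.Surjective g := by
        intro r
        refine ⟨fun j => if j = i0 then r else 0, ?_⟩
        rw [hg]
        simp
      have hcard : Module.finrank ℝ (Fin n → ℝ) = n := Module.finrank_fin_fun ℝ
      have h1 : Module.finrank ℝ (LinearMap.range f) + Module.finrank ℝ (LinearMap.ker f) = n := by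
        rw [LinearMap.finrank_range_add_finrank_ker, hcard]
      have hker1 : Module.finrank ℝ (LinearMap.ker f) = 1 := by
        rw [hker_f]; exact finrank_span_singleton hone
      have h2 : Module.finrank ℝ (LinearMap.range g) + Module.finrank ℝ (LinearMap.ker g) = n := by
        rw [LinearMap.finrank_range_add_finrank_ker, hcard]
      have hrg : Module.finrank ℝ (LinearMap.range g) = 1 := by
        rw [LinearMap.range_eq_top.mpr hgsurj, finrank_top]
        exact Module.finrank_self ℝ
      have hfr : Module.finrank ℝ (LinearMap.range f) = Module.finrank ℝ (LinearMap.ker g) := by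
        omega
      have heq : LinearMap.range f = LinearMap.ker g :=
        Submodule.eq_of_le_of_finrank_eq hrange_le hfr
      have hσmem : σ ∈ LinearMap.range f := by
        rw [heq, LinearMap.mem_ker, hg]; exact hσsum
      obtain ⟨τ, hτ⟩ := hσmem
      have hτ' : L *ᵥ τ = σ := by simpa [hfdef, Matrix.mulVecLin_apply] using hτ
      set v := Lp *ᵥ σ with hvdef
      have hLv : L *ᵥ v = σ := by
        rw [hvdef, ← hτ']
        rw [Matrix.mulVec_mulVec, Matrix.mulVec_mulVec, hLp.1]
      have hdot : σ ⬝ᵥ Lp.mulVec σ = v ⬝ᵥ (L *ᵥ v) := by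
        show σ ⬝ᵥ v = v ⬝ᵥ (L *ᵥ v)
        conv_lhs => rw [← hLv]
        exact dotProduct_comm _ _
      rw [hdot]
      have hge : 0 ≤ v ⬝ᵥ (L *ᵥ v) := by
        rw [hLdef, lap_quad ω d x hsym hloop v]
        exact Finset.sum_nonneg fun i _ => Finset.sum_nonneg fun j _ => hqnn v i j
      rcases lt_or_eq_of_le hge with h | h
      · exact h
      · exfalso
        have hcv : ∀ i j, v i = v j := hconst v h.symm
        have hveq : v = fun _ => v i0 := funext fun j => hcv j i0
        rw [hveq] at hLv
        rw [hLdef, lap_const ω d x hloop (v i0)] at hLv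
        exact hσne hLv.symm
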